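/- arXiv:math/9910073 — 4 statements merged into one kernel-verified Lean document; each statement's English description precedes it below -/
import Mathlib

section
/- Let X and Y be Banach spaces and suppose there is a constant K ≥ 1 such that every bounded operator T from any finite-dimensional subspace E of X into Y admits an extension T̃ : X → Y with ‖T̃‖ ≤ K‖T‖. If Y is a dual Banach space (Y = Z* for some Banach space Z), then every bounded operator from an arbitrary closed subspace of X into Y extends to a bounded operator from X into Y. -/
open NormedSpace

/-- If every operator from a finite-dimensional subspace of `X` into `Y`
extends with uniform constant `K`, and `Y` is (isometric to) a dual space, then every
bounded operator from an arbitrary closed subspace of `X` into `Y` extends to `X`. -/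
theorem maurey_localization_dual
    {X Y Z : Type*}
    [NormedAddCommGroup X] [NormedSpace ℝ X] [CompleteSpace X]
    [NormedAddCommGroup Y] [NormedSpace ℝ Y] [CompleteSpace Y]
    [NormedAddCommGroup Z] [NormedSpace ℝ Z] [CompleteSpace Z]
    (e : Y ≃ₗᵢ[ℝ] StrongDual ℝ Z)
    (K : ℝ) (hK : 1 ≤ K)
    (hext : ∀ E : Submodule ℝ X, FiniteDimensional ℝ E → ∀ T : E →L[ℝ] Y,
      ∃ T' : X →L[ℝ] Y, (∀ x : E, T' x = T x) ∧ ‖T'‖ ≤ K * ‖T‖) :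
    ∀ E : Submodule ℝ X, IsClosed (E : Set X) → ∀ T : E →L[ℝ] Y,
      ∃ T' : X →L[ℝ] Y, ∀ x : E, T' x = T x := by
  intro E _hE T
  classical
  set Fs : Finset E → Submodule ℝ X := fun s => Submodule.span ℝ ((↑) '' (s : Set E)) with hFsdef
  have hFsle : ∀ s, Fs s ≤ E := fun s => Submodule.span_le.2 (by
    rintro _ ⟨y, _, rfl⟩; exact y.2)
  have hFsfin : ∀ s, FiniteDimensional ℝ (Fs s) := fun s =>
    FiniteDimensional.span_of_finite ℝ ((s.finite_toSet).image _)
  have key : ∀ s : Finset E, ∃ T' : X →L[ℝ] Y,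
      (∀ x : X, ∀ hx : x ∈ Fs s, T' x = T ⟨x, hFsle s hx⟩) ∧ ‖T'‖ ≤ K * ‖T‖ := by
    intro s
    let ι : Fs s →L[ℝ] E :=
      { toLinearMap := Submodule.inclusion (hFsle s),
        cont := continuous_induced_rng.2 continuous_subtype_val }
    obtain ⟨T', h1, h2⟩ := hext (Fs s) (hFsfin s) (T.comp ι)
    refine ⟨T', fun x hx => h1 ⟨x, hx⟩, h2.trans ?_⟩
    have hn : ‖T.comp ι‖ ≤ ‖T‖ := by
      refine ContinuousLinearMap.opNorm_le_bound _ (norm_nonneg T) (fun x => ?_)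
      have : ‖ι x‖ = ‖x‖ := rfl
      calc ‖(T.comp ι) x‖ = ‖T (ι x)‖ := rfl
        _ ≤ ‖T‖ * ‖ι x‖ := T.le_opNorm _
        _ = ‖T‖ * ‖x‖ := by rw [this]
    exact mul_le_mul_of_nonneg_left hn (le_trans zero_le_one hK)
  choose Ts hTs hTn using key
  let U : Ultrafilter (Finset E) := Ultrafilter.of Filter.atTop
  have hU : (U : Filter (Finset E)) ≤ Filter.atTop := Ultrafilter.of_le _
  have hlim : ∀ x : X, ∃ y : WeakDual ℝ Z,
      y ∈ WeakDual.toStrongDual ⁻¹' Metric.closedBall 0 (K * ‖T‖ * ‖x‖) ∧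
      Filter.Tendsto (fun s => StrongDual.toWeakDual (e (Ts s x))) U (nhds y) := by
    intro x
    set g : Finset E → WeakDual ℝ Z := fun s => StrongDual.toWeakDual (e (Ts s x)) with hg
    have hmem : ∀ s, g s ∈ WeakDual.toStrongDual ⁻¹' Metric.closedBall 0 (K * ‖T‖ * ‖x‖) := by
      intro s
      simp only [Set.mem_preimage, Metric.mem_closedBall, dist_zero_right]
      calc ‖WeakDual.toStrongDual (g s)‖ = ‖e (Ts s x)‖ := rfl
        _ = ‖Ts s x‖ := e.norm_map _
        _ ≤ ‖Ts s‖ * ‖x‖ := (Ts s).le_opNorm _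
        _ ≤ K * ‖T‖ * ‖x‖ := mul_le_mul_of_nonneg_right (hTn s) (norm_nonneg x)
    obtain ⟨y, hyB, hy⟩ := (WeakDual.isCompact_closedBall (𝕜 := ℝ) (E := Z) 0 (K * ‖T‖ * ‖x‖)).ultrafilter_le_nhds (U.map g)
        (Filter.le_principal_iff.2 (Filter.mem_map.2 (Filter.univ_mem' hmem)))
    exact ⟨y, hyB, hy⟩
  choose φ hφB hφ using hlim
  have hadd : ∀ x x', φ (x + x') = φ x + φ x' := by
    intro x x'
    refine tendsto_nhds_unique (hφ (x + x')) ?_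
    refine ((hφ x).add (hφ x')).congr (fun s => ?_)
    simp [map_add]
  have hsmul : ∀ (c : ℝ) (x : X), φ (c • x) = c • φ x := by
    intro c x
    refine tendsto_nhds_unique (hφ (c • x)) ?_
    refine ((hφ x).const_smul c).congr (fun s => ?_)
    simp [map_smul]
  let ψlin : X →ₗ[ℝ] StrongDual ℝ Z :=
    { toFun := fun x => WeakDual.toStrongDual (φ x)
      map_add' := fun x x' => by
        show WeakDual.toStrongDual (φ (x + x')) = _
        rw [hadd]; exact map_add WeakDual.toStrongDual _ _
      map_smul' := fun c x => by
        show WeakDual.toStrongDual (φ (c • x)) = _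
        rw [hsmul]; exact map_smul WeakDual.toStrongDual _ _ }
  have hψbd : ∀ x, ‖ψlin x‖ ≤ K * ‖T‖ * ‖x‖ := by
    intro x
    have := hφB x
    simp only [Set.mem_preimage, Metric.mem_closedBall, dist_zero_right] at this
    exact this
  let ψ : X →L[ℝ] StrongDual ℝ Z := ψlin.mkContinuous (K * ‖T‖) hψbd
  refine ⟨(e.symm.toContinuousLinearEquiv : StrongDual ℝ Z →L[ℝ] Y).comp ψ, fun x => ?_⟩
  have hxlim : Filter.Tendsto (fun s => StrongDual.toWeakDual (e (Ts s (x : X)))) U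
      (nhds (StrongDual.toWeakDual (e (T x)))) := by
    have hev : ∀ᶠ s in (U : Filter (Finset ↥E)), ({x} : Finset ↥E) ≤ s :=
      hU (Filter.eventually_ge_atTop _)
    refine tendsto_const_nhds.congr' (hev.mono fun s hs => ?_)
    have hxF : (x : X) ∈ Fs s :=
      Submodule.subset_span ⟨x, hs (Finset.mem_singleton_self x), rfl⟩
    have h1 : Ts s (x : X) = T x := by
      rw [hTs s _ hxF]
    exact congrArg _ (congrArg _ h1.symm)
  have : φ (x : X) = StrongDual.toWeakDual (e (T x)) :=
    tendsto_nhds_unique (hφ (x : X)) hxlim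
  show e.symm (ψ x) = T x
  have hψx : ψ (x : X) = e (T x) := by
    show WeakDual.toStrongDual (φ (x : X)) = e (T x)
    rw [this]; rfl
  rw [hψx]; exact e.symm_apply_apply _
end

section
/- Let X and Y be Banach spaces, E a closed subspace of X, and K a constant such that every finite-rank operator T : E → Y (i.e., T ∈ E* ⊗ Y) admits an extension T̃ : X → Y with ‖T̃‖ ≤ K‖T‖. If E or Y has the λ-bounded approximation property, then every bounded operator T : E → Y admits an extension T̃ : X → Y** with ‖T̃‖ ≤ Kλ‖T‖. -/
open NormedSpace Filter Topology

set_option maxHeartbeats 1000000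
set_option synthInstance.maxHeartbeats 1000000

/-- The topological dual of a normed space, as `NormedSpace.Dual` was defined in the older Mathlib. -/
abbrev NormedSpace.Dual (𝕜 : Type*) [NontriviallyNormedField 𝕜] (E : Type*)
    [SeminormedAddCommGroup E] [NormedSpace 𝕜 E] : Type _ :=
  E →L[𝕜] 𝕜

/-- `Z` has the `lam`-bounded approximation property: the identity is approximated
uniformly on finite sets by finite-rank operators of norm at most `lam`. -/
def HasBAP (lam : ℝ) (Z : Type*) [NormedAddCommGroup Z] [NormedSpace ℝ Z] : Prop :=
  ∀ (s : Finset Z) (ε : ℝ), 0 < ε →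
    ∃ T : Z →L[ℝ] Z, FiniteDimensional ℝ (LinearMap.range (T : Z →ₗ[ℝ] Z)) ∧
      ‖T‖ ≤ lam ∧ ∀ x ∈ s, ‖T x - x‖ < ε

/-- if every finite-rank operator from `E` to `Y` extends to `X` with
constant `K`, and `E` or `Y` has the `lam`-bounded approximation property, then every
bounded operator `T : E → Y` extends to an operator `X → Y**` of norm `≤ K·lam·‖T‖`. -/
theorem extension_of_finite_rank_extension
    {X Y : Type*}
    [NormedAddCommGroup X] [NormedSpace ℝ X] [CompleteSpace X]
    [NormedAddCommGroup Y] [NormedSpace ℝ Y] [CompleteSpace Y]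
    (E : Submodule ℝ X) (hE : IsClosed (E : Set X))
    (K lam : ℝ)
    (hfin : ∀ T : E →L[ℝ] Y, FiniteDimensional ℝ (LinearMap.range (T : E →ₗ[ℝ] Y)) →
      ∃ T' : X →L[ℝ] Y, (∀ x : E, T' x = T x) ∧ ‖T'‖ ≤ K * ‖T‖)
    (hbap : HasBAP lam E ∨ HasBAP lam Y) :
    ∀ T : E →L[ℝ] Y,
      ∃ T' : X →L[ℝ] NormedSpace.Dual ℝ (NormedSpace.Dual ℝ Y),
        (∀ x : E, T' x = NormedSpace.inclusionInDoubleDual ℝ Y (T x)) ∧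
        ‖T'‖ ≤ K * lam * ‖T‖ := by
  classical
  intro T
  -- trivial case T = 0
  by_cases hT0 : T = 0
  · refine ⟨0, ?_, ?_⟩
    · intro x
      simp [hT0]
    · rw [hT0]
      rw [show ‖(0 : ↥E →L[ℝ] Y)‖ = 0 from ContinuousLinearMap.opNorm_zero, mul_zero]
      exact le_of_eq ContinuousLinearMap.opNorm_zero
  -- Step 1: approximate T by finite-rank operators of norm ≤ lam * ‖T‖
  have hS : ∀ (s : Finset E) (ε : ℝ), 0 < ε →
      ∃ S : E →L[ℝ] Y, FiniteDimensional ℝ (LinearMap.range (S : E →ₗ[ℝ] Y)) ∧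
        ‖S‖ ≤ lam * ‖T‖ ∧ ∀ x ∈ s, ‖S x - T x‖ < ε := by
    rcases hbap with hbE | hbY
    · intro s ε hε
      obtain ⟨A, hAfin, hAnorm, hA⟩ := hbE s (ε / (‖T‖ + 1)) (by positivity)
      refine ⟨T.comp A, ?_, ?_, ?_⟩
      · rw [ContinuousLinearMap.toLinearMap_comp, LinearMap.range_comp]
        exact Module.Finite.map _ _
      · calc ‖T.comp A‖ ≤ ‖T‖ * ‖A‖ := ContinuousLinearMap.opNorm_comp_le _ _
          _ ≤ lam * ‖T‖ := by nlinarith [norm_nonneg T, norm_nonneg A]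
      · intro x hx
        have h1 : ‖T (A x) - T x‖ ≤ ‖T‖ * ‖A x - x‖ := by
          rw [← map_sub]; exact T.le_opNorm _
        have h2 : ‖T‖ * ‖A x - x‖ ≤ ‖T‖ * (ε / (‖T‖ + 1)) :=
          mul_le_mul_of_nonneg_left (le_of_lt (hA x hx)) (norm_nonneg T)
        have h3 : ‖T‖ * (ε / (‖T‖ + 1)) < ε := by
          rw [mul_div_assoc', div_lt_iff₀ (by positivity)]
          nlinarith [norm_nonneg T]
        simpa [ContinuousLinearMap.comp_apply] using lt_of_le_of_lt (h1.trans h2) h3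
    · intro s ε hε
      obtain ⟨B, hBfin, hBnorm, hB⟩ := hbY (s.image T) ε hε
      refine ⟨B.comp T, ?_, ?_, ?_⟩
      · rw [ContinuousLinearMap.toLinearMap_comp, LinearMap.range_comp]
        exact Submodule.finiteDimensional_of_le (LinearMap.map_le_range)
      · calc ‖B.comp T‖ ≤ ‖B‖ * ‖T‖ := ContinuousLinearMap.opNorm_comp_le _ _
          _ ≤ lam * ‖T‖ := mul_le_mul_of_nonneg_right hBnorm (norm_nonneg T)
      · intro x hx
        simpa [ContinuousLinearMap.comp_apply] using
          hB (T x) (Finset.mem_image_of_mem T hx)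
  -- K is positive
  obtain ⟨x₀, hx₀⟩ : ∃ x₀ : E, T x₀ ≠ 0 := by
    by_contra h
    push_neg at h
    exact hT0 (ContinuousLinearMap.ext h)
  have hK : 0 < K := by
    obtain ⟨S, hSfin, -, hSpt⟩ := hS {x₀} ‖T x₀‖ (norm_pos_iff.mpr hx₀)
    have hSx₀ : S x₀ ≠ 0 := by
      intro h
      have := hSpt x₀ (Finset.mem_singleton_self x₀)
      rw [h, zero_sub, norm_neg] at this
      exact lt_irrefl _ this
    obtain ⟨S', hS'ext, hS'norm⟩ := hfin S hSfin
    have h1 : 0 < ‖S x₀‖ := norm_pos_iff.mpr hSx₀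
    have h2 : ‖S x₀‖ ≤ ‖S'‖ * ‖(x₀ : X)‖ := by
      rw [← hS'ext x₀]; exact S'.le_opNorm _
    have h3 : 0 < ‖(x₀ : X)‖ := by
      rw [norm_pos_iff]
      intro h
      apply hx₀
      have : x₀ = 0 := by
        ext; exact h
      rw [this, map_zero]
    have h4 : 0 < ‖S'‖ := by
      nlinarith
    have h5 : 0 < K * ‖S‖ := lt_of_lt_of_le h4 hS'norm
    nlinarith [norm_nonneg S]
  set M : ℝ := K * (lam * ‖T‖) with hM
  have hlamT : 0 ≤ lam * ‖T‖ := by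
    obtain ⟨S, -, hSnorm, -⟩ := hS ∅ 1 one_pos
    exact le_trans (norm_nonneg S) hSnorm
  have hM0 : 0 ≤ M := mul_nonneg hK.le hlamT
  -- Step 2: for each index, a finite-rank extension close to T on the finset
  have hP : ∀ i : Finset E × ℕ, ∃ S' : X →L[ℝ] Y, ‖S'‖ ≤ M ∧
      ∀ x ∈ i.1, ‖S' x - T x‖ < 1 / (i.2 + 1) := by
    intro i
    obtain ⟨S, hSfin, hSnorm, hSpt⟩ := hS i.1 (1 / (i.2 + 1)) (by positivity)
    obtain ⟨S', hS'ext, hS'norm⟩ := hfin S hSfin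
    refine ⟨S', ?_, ?_⟩
    · calc ‖S'‖ ≤ K * ‖S‖ := hS'norm
        _ ≤ M := mul_le_mul_of_nonneg_left hSnorm hK.le
    · intro x hx
      rw [hS'ext x]
      exact hSpt x hx
  choose Sfun hSnorm hSpt using hP
  -- the ultrafilter
  set U : Ultrafilter (Finset E × ℕ) := Ultrafilter.of atTop with hU
  have hUle : (U : Filter (Finset E × ℕ)) ≤ atTop := Ultrafilter.of_le _
  -- pointwise convergence on E along atTop
  have hSx : ∀ x : E, Filter.Tendsto (fun i => Sfun i x) atTop (nhds (T x)) := by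
    intro x
    rw [Metric.tendsto_nhds]
    intro ε hε
    obtain ⟨N, hN⟩ := exists_nat_one_div_lt hε
    filter_upwards [Filter.eventually_ge_atTop (({x}, N) : Finset E × ℕ)] with i hi
    have hx : x ∈ i.1 := hi.1 (Finset.mem_singleton_self x)
    have h1 : ‖Sfun i x - T x‖ < 1 / (i.2 + 1) := hSpt i x hx
    have h2 : (1 : ℝ) / (i.2 + 1) ≤ 1 / (N + 1) := by
      apply one_div_le_one_div_of_le (by positivity)
      exact_mod_cast add_le_add_left (Nat.cast_le.mpr hi.2) 1
    rw [dist_eq_norm]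
    exact lt_of_lt_of_le (lt_of_lt_of_le h1 h2) hN.le
  -- existence of limits along the ultrafilter
  have key : ∀ (x : X) (f : Dual ℝ Y), ∃ r : ℝ,
      Filter.Tendsto (fun i => f (Sfun i x)) (U : Filter (Finset E × ℕ)) (nhds r) := by
    intro x f
    set B := ‖f‖ * (M * ‖x‖) with hB
    have hmem : ∀ i, f (Sfun i x) ∈ Set.Icc (-B) B := by
      intro i
      rw [Set.mem_Icc, ← abs_le, ← Real.norm_eq_abs]
      calc ‖f (Sfun i x)‖ ≤ ‖f‖ * ‖Sfun i x‖ := f.le_opNorm _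
        _ ≤ ‖f‖ * (M * ‖x‖) := by
            apply mul_le_mul_of_nonneg_left _ (norm_nonneg f)
            calc ‖Sfun i x‖ ≤ ‖Sfun i‖ * ‖x‖ := (Sfun i).le_opNorm _
              _ ≤ M * ‖x‖ := mul_le_mul_of_nonneg_right (hSnorm i) (norm_nonneg x)
    have hle : (U.map (fun i => f (Sfun i x)) : Filter ℝ) ≤ Filter.principal (Set.Icc (-B) B) := by
      rw [Filter.le_principal_iff]
      exact Filter.mem_map.mpr (Filter.univ_mem' hmem)
    obtain ⟨r, -, hr⟩ := (isCompact_Icc (a := -B) (b := B)).ultrafilter_le_nhds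
      (U.map (fun i => f (Sfun i x))) hle
    exact ⟨r, hr⟩
  choose lim' hlim using key
  -- bound on limits
  have hbound : ∀ (x : X) (f : Dual ℝ Y), ‖lim' x f‖ ≤ M * ‖x‖ * ‖f‖ := by
    intro x f
    apply le_of_tendsto (hlim x f).norm
    apply Filter.Eventually.of_forall
    intro i
    calc ‖f (Sfun i x)‖ ≤ ‖f‖ * ‖Sfun i x‖ := f.le_opNorm _
      _ ≤ ‖f‖ * (M * ‖x‖) := by
          apply mul_le_mul_of_nonneg_left _ (norm_nonneg f)
          calc ‖Sfun i x‖ ≤ ‖Sfun i‖ * ‖x‖ := (Sfun i).le_opNorm _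
            _ ≤ M * ‖x‖ := mul_le_mul_of_nonneg_right (hSnorm i) (norm_nonneg x)
      _ = M * ‖x‖ * ‖f‖ := by ring
  -- inner functional
  have hadd_f : ∀ (x : X) (f g : Dual ℝ Y), lim' x (f + g) = lim' x f + lim' x g := by
    intro x f g
    refine tendsto_nhds_unique (hlim x (f + g)) ?_
    have := (hlim x f).add (hlim x g)
    simpa [ContinuousLinearMap.add_apply] using this
  have hsmul_f : ∀ (x : X) (c : ℝ) (f : Dual ℝ Y), lim' x (c • f) = c * lim' x f := by
    intro x c f
    refine tendsto_nhds_unique (hlim x (c • f)) ?_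
    have := (hlim x f).const_mul c
    simpa [ContinuousLinearMap.smul_apply, smul_eq_mul] using this
  set Φ : X → Dual ℝ (Dual ℝ Y) := fun x =>
    LinearMap.mkContinuous
      { toFun := lim' x
        map_add' := hadd_f x
        map_smul' := fun c f => hsmul_f x c f }
      (M * ‖x‖) (fun f => hbound x f) with hΦ
  have hΦapply : ∀ (x : X) (f : Dual ℝ Y), Φ x f = lim' x f := fun x f => rfl
  have hΦnorm : ∀ x : X, ‖Φ x‖ ≤ M * ‖x‖ := fun x =>
    LinearMap.mkContinuous_norm_le _ (by positivity) _
  -- outer linear map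
  have hadd_x : ∀ (x y : X), Φ (x + y) = Φ x + Φ y := by
    intro x y
    ext f
    rw [ContinuousLinearMap.add_apply, hΦapply, hΦapply, hΦapply]
    refine tendsto_nhds_unique (hlim (x + y) f) ?_
    have := (hlim x f).add (hlim y f)
    simpa [map_add] using this
  have hsmul_x : ∀ (c : ℝ) (x : X), Φ (c • x) = c • Φ x := by
    intro c x
    ext f
    rw [ContinuousLinearMap.smul_apply, hΦapply, hΦapply, smul_eq_mul]
    refine tendsto_nhds_unique (hlim (c • x) f) ?_
    have := (hlim x f).const_mul c
    simpa [map_smul, smul_eq_mul] using this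
  set Ψ : X →ₗ[ℝ] Dual ℝ (Dual ℝ Y) :=
    { toFun := Φ
      map_add' := hadd_x
      map_smul' := fun c x => hsmul_x c x } with hΨ
  refine ⟨Ψ.mkContinuous M (fun x => hΦnorm x), ?_, ?_⟩
  · intro x
    ext f
    have h1 : (Ψ.mkContinuous M (fun x => hΦnorm x)) (x : X) f = lim' x f := rfl
    rw [h1]
    have h2 : inclusionInDoubleDual ℝ Y (T x) f = f (T x) := rfl
    rw [h2]
    refine tendsto_nhds_unique (hlim (x : X) f) ?_
    exact (f.continuous.tendsto _).comp ((hSx x).mono_left hUle)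
  · have := Ψ.mkContinuous_norm_le hM0 (fun x => hΦnorm x)
    calc ‖Ψ.mkContinuous M (fun x => hΦnorm x)‖ ≤ M := this
      _ = K * lam * ‖T‖ := by rw [hM]; ring
end

section
/- Let X and Y be Banach spaces such that for every closed subspace E ⊆ X every bounded operator T : E → Y admits a bounded extension T̃ : X → Y. Then every quotient Z of X has the same property: for every closed subspace F ⊆ Z, every bounded operator S : F → Y extends to a bounded operator from Z to Y. -/
/-- if every bounded operator from any closed subspace of `X` into `Y`
extends to `X`, then every quotient `Z` of `X` has the same extension property. -/
theorem extension_property_of_quotient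
    {X Y Z : Type*}
    [NormedAddCommGroup X] [NormedSpace ℝ X] [CompleteSpace X]
    [NormedAddCommGroup Y] [NormedSpace ℝ Y] [CompleteSpace Y]
    [NormedAddCommGroup Z] [NormedSpace ℝ Z] [CompleteSpace Z]
    (q : X →L[ℝ] Z) (hq : Function.Surjective q)
    (hX : ∀ E : Submodule ℝ X, IsClosed (E : Set X) → ∀ T : E →L[ℝ] Y,
      ∃ T' : X →L[ℝ] Y, ∀ x : E, T' x = T x) :
    ∀ F : Submodule ℝ Z, IsClosed (F : Set Z) → ∀ S : F →L[ℝ] Y,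
      ∃ S' : Z →L[ℝ] Y, ∀ z : F, S' z = S z := by
  intro F hF S
  set E : Submodule ℝ X := F.comap q.toLinearMap with hE
  have hEc : IsClosed (E : Set X) := hF.preimage q.continuous
  -- restriction of q to E, viewed as a map into F
  have hmem : ∀ x : E, q x ∈ F := fun x => x.2
  let qE : E →L[ℝ] F := (q.comp E.subtypeL).codRestrict F hmem
  obtain ⟨T', hT'⟩ := hX E hEc (S.comp qE)
  -- T' vanishes on ker q
  have hker : ∀ x : X, q x = 0 → T' x = 0 := by
    intro x hx
    have hxE : x ∈ E := by
      simp only [hE, Submodule.mem_comap, hx]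
      exact (show q x ∈ F by rw [hx]; exact F.zero_mem)
    have := hT' ⟨x, hxE⟩
    simp only [ContinuousLinearMap.comp_apply] at this
    have hq0 : qE ⟨x, hxE⟩ = 0 := by
      apply Subtype.ext
      exact hx
    rw [hq0, map_zero] at this
    exact this
  -- T' is constant on fibers of q
  have hfib : ∀ x x' : X, q x = q x' → T' x = T' x' := by
    intro x x' h
    have h0 : q (x - x') = 0 := by rw [map_sub, h, sub_self]
    have := hker _ h0
    rw [map_sub, sub_eq_zero] at this
    exact this
  -- define the factored map
  let g : Z → Y := fun z => T' (Function.surjInv hq z)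
  have hgq : ∀ x : X, g (q x) = T' x := fun x =>
    hfib _ _ (Function.surjInv_eq hq (q x))
  have hadd : ∀ z w : Z, g (z + w) = g z + g w := by
    intro z w
    have hz := Function.surjInv_eq hq z
    have hw := Function.surjInv_eq hq w
    have : q (Function.surjInv hq z + Function.surjInv hq w) = z + w := by
      rw [map_add, hz, hw]
    calc g (z + w) = T' (Function.surjInv hq z + Function.surjInv hq w) := by
          rw [← this, hgq]
      _ = g z + g w := by rw [map_add]
  have hsmul : ∀ (c : ℝ) (z : Z), g (c • z) = c • g z := by
    intro c z
    have hz := Function.surjInv_eq hq z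
    have : q (c • Function.surjInv hq z) = c • z := by rw [map_smul, hz]
    calc g (c • z) = T' (c • Function.surjInv hq z) := by rw [← this, hgq]
      _ = c • g z := by rw [map_smul]
  have hgcont : Continuous g := by
    rw [(q.isQuotientMap hq).continuous_iff]
    have : g ∘ q = T' := funext hgq
    rw [this]
    exact T'.continuous
  refine ⟨⟨⟨⟨g, fun a b => hadd a b⟩, hsmul⟩, hgcont⟩, ?_⟩
  intro z
  obtain ⟨x, hx⟩ := hq (z : Z)
  have hxE : x ∈ E := by
    simp only [hE, Submodule.mem_comap, hx]
    exact (show q x ∈ F by rw [hx]; exact z.2)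
  have h1 : g (z : Z) = T' x := by rw [← hx, hgq]
  have h2 := hT' ⟨x, hxE⟩
  simp only [ContinuousLinearMap.comp_apply] at h2
  have h3 : qE ⟨x, hxE⟩ = z := by
    apply Subtype.ext
    exact hx
  rw [h3] at h2
  exact h1.trans h2
end

section
/- Let X and Y have normalized unconditional bases (xₙ) and (yₙ) respectively, with (yₙ) dominated by (xₙ) with constant K₁, and suppose (yₙ) satisfies an upper q-estimate with constant K₂ for some 1 ≤ q < ∞. For 0 < δ < 1 let X(δ,q) and Y(δ,q) be the closed linear spans of (xⱼ + δeⱼ) and (yⱼ + δeⱼ) in (X ⊕ ℓ_q)_∞ and (Y ⊕ ℓ_q)_∞, where (eⱼ) is the unit vector basis of ℓ_q. If the formal identity I_δ : X(δ,q) → Y(δ,q) extends to a bounded operator Ĩ_δ : (X ⊕ ℓ_q)_∞ → Y(δ,q) with ‖Ĩ_δ‖ < δ⁻¹, then for 2 ≤ q < ∞ and all real scalars (tₙ): δ²(1 − ‖Ĩ_δ‖δ)(Σ|tₙ|^q)^{1/q} ≤ 2·K₂·ubc(xₙ)·‖Σ tₙxₙ‖, i.e., (xₙ) satisfies a lower q-estimate.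 -/
open ENNReal

private lemma aux_rpow_superadd {r : ℝ} (hr : 1 ≤ r) {x y : ℝ} (hx : 0 ≤ x) (hy : 0 ≤ y) :
    x ^ r + y ^ r ≤ (x + y) ^ r := by
  lift x to NNReal using hx
  lift y to NNReal using hy
  exact_mod_cast NNReal.add_rpow_le_rpow_add x y hr

private lemma aux_rpow_midpoint {r : ℝ} (hr : 1 ≤ r) {x y : ℝ} (hx : 0 ≤ x) (hy : 0 ≤ y) :
    ((x + y) / 2) ^ r ≤ (x ^ r + y ^ r) / 2 := by
  lift x to NNReal using hx
  lift y to NNReal using hy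
  have h := NNReal.rpow_arith_mean_le_arith_mean2_rpow (1/2) (1/2) x y (add_halves 1) hr
  have h2 := (NNReal.coe_le_coe.mpr h)
  push_cast at h2
  calc ((↑x + ↑y) / 2 : ℝ) ^ r = ((1/2) * ↑x + (1/2) * ↑y : ℝ) ^ r := by
        rw [show ((↑x + ↑y) / 2 : ℝ) = (1/2) * ↑x + (1/2) * ↑y by ring]
    _ ≤ (1/2) * (↑x : ℝ) ^ r + (1/2) * (↑y : ℝ) ^ r := h2
    _ = ((↑x : ℝ) ^ r + (↑y : ℝ) ^ r) / 2 := by ring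

private lemma aux_clarkson {q : ℝ} (hq : 2 ≤ q) (X a : ℝ) :
    2 * (|X| ^ q + |a| ^ q) ≤ |X + a| ^ q + |X - a| ^ q := by
  have hr : 1 ≤ q / 2 := by linarith
  have habs : ∀ z : ℝ, |z| ^ q = (z ^ 2) ^ (q / 2) := by
    intro z
    rw [← sq_abs, ← Real.rpow_natCast |z| 2, ← Real.rpow_mul (abs_nonneg z)]
    congr 1
    push_cast
    ring
  rw [habs X, habs a, habs (X + a), habs (X - a)]
  have h1 : (X ^ 2) ^ (q/2) + (a ^ 2) ^ (q/2) ≤ (X ^ 2 + a ^ 2) ^ (q/2) :=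
    aux_rpow_superadd hr (sq_nonneg X) (sq_nonneg a)
  have h2 : (X ^ 2 + a ^ 2) ^ (q/2) ≤ (((X+a)^2) ^ (q/2) + ((X-a)^2) ^ (q/2)) / 2 := by
    have h3 := aux_rpow_midpoint hr (sq_nonneg (X+a)) (sq_nonneg (X-a))
    have he : ((X+a)^2 + (X-a)^2) / 2 = X^2 + a^2 := by ring
    rw [he] at h3
    exact h3
  linarith

private lemma aux_signed_sum {q : ℝ} (hq : 2 ≤ q) (s : Finset ℕ) (a : ℕ → ℝ) :
    2 ^ s.card * ∑ j ∈ s, |a j| ^ q ≤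
      ∑ A ∈ s.powerset, |∑ j ∈ s, if j ∈ A then a j else -a j| ^ q := by
  induction s using Finset.induction_on with
  | empty =>
    simp only [Finset.card_empty, pow_zero, Finset.sum_empty, mul_zero,
      Finset.powerset_empty, Finset.sum_singleton, abs_zero]
    positivity
  | @insert k s' hk ih =>
    have hdisj : Disjoint s'.powerset (s'.powerset.image (insert k)) := by
      rw [Finset.disjoint_left]
      rintro A hA hA2
      obtain ⟨B, hB, rfl⟩ := Finset.mem_image.mp hA2
      exact hk (Finset.mem_powerset.mp hA (Finset.mem_insert_self k B))
    rw [Finset.powerset_insert, Finset.sum_union hdisj,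
      Finset.sum_image (by
        intro A hA B hB hAB
        have hkA : k ∉ A := fun h => hk (Finset.mem_powerset.mp hA h)
        have hkB : k ∉ B := fun h => hk (Finset.mem_powerset.mp hB h)
        rw [← Finset.erase_insert hkA, ← Finset.erase_insert hkB, hAB])]
    have hT1 : ∀ A ∈ s'.powerset,
        (∑ j ∈ insert k s', if j ∈ A then a j else -a j)
          = (∑ j ∈ s', if j ∈ A then a j else -a j) - a k := by
      intro A hA
      have hkA : k ∉ A := fun h => hk (Finset.mem_powerset.mp hA h)
      rw [Finset.sum_insert hk, if_neg hkA]
      ring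
    have hT2 : ∀ A ∈ s'.powerset,
        (∑ j ∈ insert k s', if j ∈ insert k A then a j else -a j)
          = (∑ j ∈ s', if j ∈ A then a j else -a j) + a k := by
      intro A hA
      rw [Finset.sum_insert hk, if_pos (Finset.mem_insert_self k A)]
      have hcong : ∀ j ∈ s', (if j ∈ insert k A then a j else -a j)
          = (if j ∈ A then a j else -a j) := by
        intro j hj
        have hjk : j ≠ k := fun h => hk (h ▸ hj)
        simp [Finset.mem_insert, hjk]
      rw [Finset.sum_congr rfl hcong]
      ring
    have e1 : ∑ A ∈ s'.powerset, |∑ j ∈ insert k s', if j ∈ A then a j else -a j| ^ q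
        = ∑ A ∈ s'.powerset, |(∑ j ∈ s', if j ∈ A then a j else -a j) - a k| ^ q :=
      Finset.sum_congr rfl fun A hA => by rw [hT1 A hA]
    have e2 : ∑ A ∈ s'.powerset, |∑ j ∈ insert k s', if j ∈ insert k A then a j else -a j| ^ q
        = ∑ A ∈ s'.powerset, |(∑ j ∈ s', if j ∈ A then a j else -a j) + a k| ^ q :=
      Finset.sum_congr rfl fun A hA => by rw [hT2 A hA]
    rw [e1, e2, Finset.card_insert_of_notMem hk, Finset.sum_insert hk]
    have key : ∀ A ∈ s'.powerset,
        2 * |∑ j ∈ s', if j ∈ A then a j else -a j| ^ q + 2 * |a k| ^ q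
          ≤ |(∑ j ∈ s', if j ∈ A then a j else -a j) - a k| ^ q
            + |(∑ j ∈ s', if j ∈ A then a j else -a j) + a k| ^ q := by
      intro A _
      have h := aux_clarkson hq (∑ j ∈ s', if j ∈ A then a j else -a j) (a k)
      linarith
    have hsum := Finset.sum_le_sum key
    rw [Finset.sum_add_distrib, ← Finset.mul_sum, Finset.sum_const,
      Finset.card_powerset, nsmul_eq_mul, Finset.sum_add_distrib] at hsum
    have hcast : ((2 ^ s'.card : ℕ) : ℝ) = 2 ^ s'.card := by push_cast; ring
    rw [hcast] at hsum
    rw [pow_succ]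
    nlinarith [ih, hsum]

set_option maxHeartbeats 1000000 in
/-- Theorem 2.3, case `2 ≤ q < ∞`: lower `q`-estimate for `(xₙ)` from a
bounded extension of the formal identity `X(δ,q) → Y(δ,q)`. -/
theorem lower_q_estimate_of_extension
    {X Y : Type*}
    [NormedAddCommGroup X] [NormedSpace ℝ X] [CompleteSpace X]
    [NormedAddCommGroup Y] [NormedSpace ℝ Y] [CompleteSpace Y]
    (q : ℝ) (hq2 : 2 ≤ q) [Fact (1 ≤ ENNReal.ofReal q)]
    (x : ℕ → X) (y : ℕ → Y)
    -- `(xₙ)`, `(yₙ)` are normalized bases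
    (hxnorm : ∀ n, ‖x n‖ = 1) (hynorm : ∀ n, ‖y n‖ = 1)
    (hxtotal : (Submodule.span ℝ (Set.range x)).topologicalClosure = ⊤)
    (hytotal : (Submodule.span ℝ (Set.range y)).topologicalClosure = ⊤)
    -- unconditionality of `(xₙ)` with constant `ubcx`, and of `(yₙ)` with constant `ubcy`
    (ubcx : ℝ)
    (hubcx : ∀ (s : Finset ℕ) (a ε : ℕ → ℝ), (∀ i, ε i = 1 ∨ ε i = -1) →
      ‖∑ i ∈ s, (ε i * a i) • x i‖ ≤ ubcx * ‖∑ i ∈ s, a i • x i‖)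
    (ubcy : ℝ)
    (hubcy : ∀ (s : Finset ℕ) (a ε : ℕ → ℝ), (∀ i, ε i = 1 ∨ ε i = -1) →
      ‖∑ i ∈ s, (ε i * a i) • y i‖ ≤ ubcy * ‖∑ i ∈ s, a i • y i‖)
    -- `(yₙ) < (xₙ)` with constant `K₁`
    (K₁ : ℝ)
    (hdom : ∀ (s : Finset ℕ) (a : ℕ → ℝ),
      ‖∑ i ∈ s, a i • y i‖ ≤ K₁ * ‖∑ i ∈ s, a i • x i‖)
    -- `(yₙ)` satisfies an upper `q`-estimate with constant `K₂`
    (K₂ : ℝ)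
    (hupper : ∀ (s : Finset ℕ) (a : ℕ → ℝ),
      ‖∑ i ∈ s, a i • y i‖ ≤ K₂ * (∑ i ∈ s, |a i| ^ q) ^ (1 / q))
    (δ : ℝ) (hδ0 : 0 < δ) (hδ1 : δ < 1)
    -- `Ĩ_δ` : a bounded extension of the formal identity, with values in `Y(δ,q)`
    (Itil : (X × lp (fun _ : ℕ => ℝ) (ENNReal.ofReal q)) →L[ℝ]
      (Y × lp (fun _ : ℕ => ℝ) (ENNReal.ofReal q)))
    (hext : ∀ j : ℕ,
      Itil (x j, δ • lp.single (ENNReal.ofReal q) j (1 : ℝ)) =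
        (y j, δ • lp.single (ENNReal.ofReal q) j (1 : ℝ)))
    (hrange : ∀ v, Itil v ∈ (Submodule.span ℝ (Set.range fun j : ℕ =>
        ((y j, δ • lp.single (ENNReal.ofReal q) j (1 : ℝ)) :
          Y × lp (fun _ : ℕ => ℝ) (ENNReal.ofReal q)))).topologicalClosure)
    (hnorm : ‖Itil‖ < δ⁻¹) :
    ∀ (s : Finset ℕ) (t : ℕ → ℝ),
      δ ^ 2 * (1 - ‖Itil‖ * δ) * (∑ i ∈ s, |t i| ^ q) ^ (1 / q) ≤
        2 * K₂ * ubcx * ‖∑ i ∈ s, t i • x i‖ := by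
  intro s t
  have hq0 : (0:ℝ) < q := by linarith
  have hpq : (ENNReal.ofReal q).toReal = q := ENNReal.toReal_ofReal hq0.le
  have hq0' : 0 < (ENNReal.ofReal q).toReal := by rw [hpq]; exact hq0
  -- `K₂ ≥ 1`
  have hK2 : 1 ≤ K₂ := by
    have h := hupper {0} (fun _ => 1)
    simpa [hynorm, Real.one_rpow] using h
  have hK2pos : (0:ℝ) < K₂ := by linarith
  -- `ubcx ≥ 1`
  have hubc1 : 1 ≤ ubcx := by
    have h := hubcx {0} (fun _ => 1) (fun _ => 1) (fun _ => Or.inl rfl)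
    simpa [hxnorm] using h
  have hN0 : (0:ℝ) ≤ ‖Itil‖ := norm_nonneg _
  have hNδ : ‖Itil‖ * δ < 1 := by
    have h := mul_lt_mul_of_pos_right hnorm hδ0
    rwa [inv_mul_cancel₀ hδ0.ne'] at h
  set u : X := ∑ i ∈ s, t i • x i with hu
  -- norms of finite sums of `lp.single`s
  have hnormsingle : ∀ (s' : Finset ℕ) (c : ℕ → ℝ),
      ‖(∑ j ∈ s', lp.single (ENNReal.ofReal q) j (c j) : lp (fun _ : ℕ => ℝ) (ENNReal.ofReal q))‖
        = (∑ j ∈ s', |c j| ^ q) ^ (1/q) := by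
    intro s' c
    have h1 : ‖(∑ j ∈ s', lp.single (ENNReal.ofReal q) j (c j) : lp (fun _ : ℕ => ℝ) (ENNReal.ofReal q))‖ ^ q
        = ∑ j ∈ s', |c j| ^ q := by
      have h2 := lp.norm_sum_single (p := ENNReal.ofReal q) (E := fun _ : ℕ => ℝ) hq0' c s'
      rw [hpq] at h2
      simpa [Real.norm_eq_abs] using h2
    rw [← h1, ← Real.rpow_mul (norm_nonneg _), mul_one_div_cancel hq0.ne', Real.rpow_one]
  have hsndgen : ∀ (s' : Finset ℕ) (c : ℕ → ℝ),
      (∑ j ∈ s', c j • ((δ:ℝ) • (lp.single (ENNReal.ofReal q) j (1:ℝ) : lp (fun _ : ℕ => ℝ) (ENNReal.ofReal q))) : lp (fun _ : ℕ => ℝ) (ENNReal.ofReal q))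
        = δ • ∑ j ∈ s', lp.single (ENNReal.ofReal q) j (c j) := by
    intro s' c
    rw [Finset.smul_sum]
    refine Finset.sum_congr rfl fun j _ => ?_
    rw [smul_comm, ← lp.single_smul, smul_eq_mul, mul_one]
  -- everything in `Y(δ,q)` satisfies `‖w.1‖ ≤ (K₂/δ) * ‖w.2‖`
  have hclosure : ∀ w : Y × lp (fun _ : ℕ => ℝ) (ENNReal.ofReal q),
      w ∈ (Submodule.span ℝ (Set.range fun j : ℕ =>
        ((y j, δ • lp.single (ENNReal.ofReal q) j (1 : ℝ)) : Y × lp (fun _ : ℕ => ℝ) (ENNReal.ofReal q)))).topologicalClosure →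
      ‖w.1‖ ≤ (K₂ / δ) * ‖w.2‖ := by
    have hcl : IsClosed {w : Y × lp (fun _ : ℕ => ℝ) (ENNReal.ofReal q) | ‖w.1‖ ≤ (K₂ / δ) * ‖w.2‖} :=
      isClosed_le (continuous_fst.norm) (continuous_const.mul continuous_snd.norm)
    have hsub : ((Submodule.span ℝ (Set.range fun j : ℕ =>
        ((y j, δ • lp.single (ENNReal.ofReal q) j (1 : ℝ)) : Y × lp (fun _ : ℕ => ℝ) (ENNReal.ofReal q)))) : Set _)
        ⊆ {w : Y × lp (fun _ : ℕ => ℝ) (ENNReal.ofReal q) | ‖w.1‖ ≤ (K₂ / δ) * ‖w.2‖} := by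
      intro w hw
      obtain ⟨c, rfl⟩ := Finsupp.mem_span_range_iff_exists_finsupp.mp hw
      rw [Finsupp.sum]
      simp only [Set.mem_setOf_eq]
      have h1 : (∑ j ∈ c.support, c j •
            ((y j, δ • (lp.single (ENNReal.ofReal q) j (1:ℝ) : lp (fun _ : ℕ => ℝ) (ENNReal.ofReal q))) : Y × lp (fun _ : ℕ => ℝ) (ENNReal.ofReal q))).1
          = ∑ j ∈ c.support, c j • y j := by
        simp [Prod.fst_sum]
      have h2 : (∑ j ∈ c.support, c j •
            ((y j, δ • (lp.single (ENNReal.ofReal q) j (1:ℝ) : lp (fun _ : ℕ => ℝ) (ENNReal.ofReal q))) : Y × lp (fun _ : ℕ => ℝ) (ENNReal.ofReal q))).2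
          = δ • ∑ j ∈ c.support, lp.single (ENNReal.ofReal q) j (c j) := by
        rw [Prod.snd_sum]
        simp only [Prod.smul_snd]
        exact hsndgen c.support c
      rw [h1, h2, norm_smul, Real.norm_eq_abs, abs_of_pos hδ0, hnormsingle]
      have he : K₂ / δ * (δ * (∑ j ∈ c.support, |c j| ^ q) ^ (1/q))
          = K₂ * (∑ j ∈ c.support, |c j| ^ q) ^ (1/q) := by
        field_simp
      rw [he]
      exact hupper c.support c
    intro w hw
    have hw' : w ∈ closure ((Submodule.span ℝ (Set.range fun j : ℕ =>
        ((y j, δ • lp.single (ENNReal.ofReal q) j (1 : ℝ)) : Y × lp (fun _ : ℕ => ℝ) (ENNReal.ofReal q)))) : Set _) := by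
      rw [← Submodule.topologicalClosure_coe]
      exact hw
    exact closure_minimal hsub hcl hw'
  -- lower bound for the `ℓq`-part of `Itil (x j, 0)`
  have hψlower : ∀ j : ℕ,
      δ * (1 - ‖Itil‖ * δ) / K₂ ≤ ‖(Itil (x j, (0 : lp (fun _ : ℕ => ℝ) (ENNReal.ofReal q)))).2‖ := by
    intro j
    have hone := lp.norm_single (p := ENNReal.ofReal q) (E := fun _ : ℕ => ℝ) (ENNReal.ofReal_pos.mpr hq0) j (1:ℝ)
    rw [norm_one] at hone
    have hz : ‖Itil ((0 : X), δ • (lp.single (ENNReal.ofReal q) j (1:ℝ) : lp (fun _ : ℕ => ℝ) (ENNReal.ofReal q)))‖ ≤ ‖Itil‖ * δ := by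
      have hb := Itil.le_opNorm ((0 : X), δ • (lp.single (ENNReal.ofReal q) j (1:ℝ) : lp (fun _ : ℕ => ℝ) (ENNReal.ofReal q)))
      have hn : ‖((0 : X), δ • (lp.single (ENNReal.ofReal q) j (1:ℝ) : lp (fun _ : ℕ => ℝ) (ENNReal.ofReal q)))‖ = δ := by
        rw [Prod.norm_def]
        simp only [norm_zero, norm_smul, hone, mul_one, Real.norm_eq_abs]
        rw [abs_of_pos hδ0, max_eq_right hδ0.le]
      rw [hn] at hb
      exact hb
    have hdec : Itil (x j, δ • (lp.single (ENNReal.ofReal q) j (1:ℝ) : lp (fun _ : ℕ => ℝ) (ENNReal.ofReal q)))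
        = Itil (x j, (0 : lp (fun _ : ℕ => ℝ) (ENNReal.ofReal q))) + Itil ((0 : X), δ • (lp.single (ENNReal.ofReal q) j (1:ℝ) : lp (fun _ : ℕ => ℝ) (ENNReal.ofReal q))) := by
      rw [← map_add]
      congr 1
      simp [Prod.ext_iff]
    have h1 : (1:ℝ) ≤ ‖Itil (x j, (0 : lp (fun _ : ℕ => ℝ) (ENNReal.ofReal q)))‖ + ‖Itil‖ * δ := by
      have hb : ‖y j‖ ≤ ‖((y j, δ • (lp.single (ENNReal.ofReal q) j (1:ℝ) : lp (fun _ : ℕ => ℝ) (ENNReal.ofReal q))) : Y × lp (fun _ : ℕ => ℝ) (ENNReal.ofReal q))‖ :=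
        norm_fst_le ((y j, δ • (lp.single (ENNReal.ofReal q) j (1:ℝ) : lp (fun _ : ℕ => ℝ) (ENNReal.ofReal q))) : Y × lp (fun _ : ℕ => ℝ) (ENNReal.ofReal q))
      rw [← hext j, hdec] at hb
      have htri := norm_add_le (Itil (x j, (0 : lp (fun _ : ℕ => ℝ) (ENNReal.ofReal q))))
        (Itil ((0:X), δ • (lp.single (ENNReal.ofReal q) j (1:ℝ) : lp (fun _ : ℕ => ℝ) (ENNReal.ofReal q))))
      have hy1 := hynorm j
      linarith [hb.trans htri]
    have hw12 := hclosure _ (hrange (x j, (0 : lp (fun _ : ℕ => ℝ) (ENNReal.ofReal q))))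
    have hKd1 : (1:ℝ) ≤ K₂ / δ := by
      rw [le_div_iff₀ hδ0]; linarith
    have hwle : ‖Itil (x j, (0 : lp (fun _ : ℕ => ℝ) (ENNReal.ofReal q)))‖
        ≤ (K₂/δ) * ‖(Itil (x j, (0 : lp (fun _ : ℕ => ℝ) (ENNReal.ofReal q)))).2‖ := by
      rw [Prod.norm_def]
      apply max_le hw12
      calc ‖(Itil (x j, (0 : lp (fun _ : ℕ => ℝ) (ENNReal.ofReal q)))).2‖
          = 1 * ‖(Itil (x j, (0 : lp (fun _ : ℕ => ℝ) (ENNReal.ofReal q)))).2‖ := (one_mul _).symm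
        _ ≤ (K₂/δ) * ‖(Itil (x j, (0 : lp (fun _ : ℕ => ℝ) (ENNReal.ofReal q)))).2‖ :=
          mul_le_mul_of_nonneg_right hKd1 (norm_nonneg _)
    have h3 : 1 - ‖Itil‖ * δ ≤ (K₂/δ) * ‖(Itil (x j, (0 : lp (fun _ : ℕ => ℝ) (ENNReal.ofReal q)))).2‖ := by
      linarith
    rw [div_le_iff₀ hK2pos]
    have h4 := mul_le_mul_of_nonneg_left h3 hδ0.le
    have h5 : δ * ((K₂/δ) * ‖(Itil (x j, (0 : lp (fun _ : ℕ => ℝ) (ENNReal.ofReal q)))).2‖)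
        = ‖(Itil (x j, (0 : lp (fun _ : ℕ => ℝ) (ENNReal.ofReal q)))).2‖ * K₂ := by
      field_simp
    linarith [h5.le, h5.ge]
  -- the sign-averaged bound
  have hR0 : (0:ℝ) ≤ ‖Itil‖ * (ubcx * ‖u‖) :=
    mul_nonneg hN0 (mul_nonneg (by linarith) (norm_nonneg _))
  have hAbound : ∀ A : Finset ℕ,
      ‖(∑ j ∈ s, ((if j ∈ A then (1:ℝ) else -1) * t j) •
          (Itil (x j, (0 : lp (fun _ : ℕ => ℝ) (ENNReal.ofReal q)))).2 : lp (fun _ : ℕ => ℝ) (ENNReal.ofReal q))‖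
        ≤ ‖Itil‖ * (ubcx * ‖u‖) := by
    intro A
    have hpair : ((∑ j ∈ s, ((if j ∈ A then (1:ℝ) else -1) * t j) • x j,
          (0 : lp (fun _ : ℕ => ℝ) (ENNReal.ofReal q))) : X × lp (fun _ : ℕ => ℝ) (ENNReal.ofReal q))
        = ∑ j ∈ s, ((if j ∈ A then (1:ℝ) else -1) * t j) •
            ((x j, (0 : lp (fun _ : ℕ => ℝ) (ENNReal.ofReal q))) : X × lp (fun _ : ℕ => ℝ) (ENNReal.ofReal q)) := by
      refine Prod.ext ?_ ?_
      · rw [Prod.fst_sum]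
        exact Finset.sum_congr rfl fun j _ => rfl
      · rw [Prod.snd_sum]
        symm
        apply Finset.sum_eq_zero
        intro j _
        rw [Prod.smul_snd, smul_zero]
    have hsum2 : (∑ j ∈ s, ((if j ∈ A then (1:ℝ) else -1) * t j) •
          (Itil (x j, (0 : lp (fun _ : ℕ => ℝ) (ENNReal.ofReal q)))).2 : lp (fun _ : ℕ => ℝ) (ENNReal.ofReal q))
        = (Itil (∑ j ∈ s, ((if j ∈ A then (1:ℝ) else -1) * t j) • x j,
            (0 : lp (fun _ : ℕ => ℝ) (ENNReal.ofReal q)))).2 := by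
      rw [hpair, map_sum, Prod.snd_sum]
      refine Finset.sum_congr rfl fun j _ => ?_
      rw [map_smul]
      rfl
    rw [hsum2]
    have hε : ∀ i : ℕ, (fun j => if j ∈ A then (1:ℝ) else -1) i = 1 ∨
        (fun j => if j ∈ A then (1:ℝ) else -1) i = -1 := by
      intro i
      by_cases h : i ∈ A <;> simp [h]
    calc ‖(Itil (∑ j ∈ s, ((if j ∈ A then (1:ℝ) else -1) * t j) • x j,
            (0 : lp (fun _ : ℕ => ℝ) (ENNReal.ofReal q)))).2‖
        ≤ ‖Itil (∑ j ∈ s, ((if j ∈ A then (1:ℝ) else -1) * t j) • x j,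
            (0 : lp (fun _ : ℕ => ℝ) (ENNReal.ofReal q)))‖ := norm_snd_le _
      _ ≤ ‖Itil‖ * ‖((∑ j ∈ s, ((if j ∈ A then (1:ℝ) else -1) * t j) • x j,
            (0 : lp (fun _ : ℕ => ℝ) (ENNReal.ofReal q))) : X × lp (fun _ : ℕ => ℝ) (ENNReal.ofReal q))‖ := Itil.le_opNorm _
      _ = ‖Itil‖ * ‖∑ j ∈ s, ((if j ∈ A then (1:ℝ) else -1) * t j) • x j‖ := by
          rw [Prod.norm_def]
          simp only [norm_zero]
          rw [max_eq_left (norm_nonneg _)]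
      _ ≤ ‖Itil‖ * (ubcx * ‖u‖) :=
          mul_le_mul_of_nonneg_left (hubcx s t (fun j => if j ∈ A then (1:ℝ) else -1) hε) hN0
  -- coordinates of the signed sums
  have hwfun : ∀ A : Finset ℕ,
      (fun i => ‖(∑ j ∈ s, ((if j ∈ A then (1:ℝ) else -1) * t j) •
          (Itil (x j, (0 : lp (fun _ : ℕ => ℝ) (ENNReal.ofReal q)))).2 : lp (fun _ : ℕ => ℝ) (ENNReal.ofReal q)) i‖ ^ q)
        = fun i => |∑ j ∈ s, if j ∈ A then
              t j * (Itil (x j, (0 : lp (fun _ : ℕ => ℝ) (ENNReal.ofReal q)))).2 i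
            else -(t j * (Itil (x j, (0 : lp (fun _ : ℕ => ℝ) (ENNReal.ofReal q)))).2 i)| ^ q := by
    intro A
    funext i
    rw [Real.norm_eq_abs]
    congr 1
    rw [lp.coeFn_sum, Finset.sum_apply]
    refine congrArg _ (Finset.sum_congr rfl fun j _ => ?_)
    rw [lp.coeFn_smul, Pi.smul_apply, smul_eq_mul]
    by_cases h : j ∈ A <;> simp [h] <;> ring
  have hbig : HasSum
      (fun i => ∑ A ∈ s.powerset, |∑ j ∈ s, if j ∈ A then
            t j * (Itil (x j, (0 : lp (fun _ : ℕ => ℝ) (ENNReal.ofReal q)))).2 i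
          else -(t j * (Itil (x j, (0 : lp (fun _ : ℕ => ℝ) (ENNReal.ofReal q)))).2 i)| ^ q)
      (∑ A ∈ s.powerset, ‖(∑ j ∈ s, ((if j ∈ A then (1:ℝ) else -1) * t j) •
          (Itil (x j, (0 : lp (fun _ : ℕ => ℝ) (ENNReal.ofReal q)))).2 : lp (fun _ : ℕ => ℝ) (ENNReal.ofReal q))‖ ^ q) := by
    apply hasSum_sum
    intro A _
    have h := lp.hasSum_norm hq0' (∑ j ∈ s, ((if j ∈ A then (1:ℝ) else -1) * t j) •
        (Itil (x j, (0 : lp (fun _ : ℕ => ℝ) (ENNReal.ofReal q)))).2 : lp (fun _ : ℕ => ℝ) (ENNReal.ofReal q))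
    rw [hpq] at h
    rwa [hwfun A] at h
  have hvj : ∀ j ∈ s, HasSum
      (fun i => |t j * (Itil (x j, (0 : lp (fun _ : ℕ => ℝ) (ENNReal.ofReal q)))).2 i| ^ q)
      (‖(t j • (Itil (x j, (0 : lp (fun _ : ℕ => ℝ) (ENNReal.ofReal q)))).2 : lp (fun _ : ℕ => ℝ) (ENNReal.ofReal q))‖ ^ q) := by
    intro j _
    have h := lp.hasSum_norm hq0'
      (t j • (Itil (x j, (0 : lp (fun _ : ℕ => ℝ) (ENNReal.ofReal q)))).2 : lp (fun _ : ℕ => ℝ) (ENNReal.ofReal q))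
    rw [hpq] at h
    have he : (fun i => ‖(t j • (Itil (x j, (0 : lp (fun _ : ℕ => ℝ) (ENNReal.ofReal q)))).2 :
        lp (fun _ : ℕ => ℝ) (ENNReal.ofReal q)) i‖ ^ q)
        = fun i => |t j * (Itil (x j, (0 : lp (fun _ : ℕ => ℝ) (ENNReal.ofReal q)))).2 i| ^ q := by
      funext i
      rw [lp.coeFn_smul, Pi.smul_apply, smul_eq_mul, Real.norm_eq_abs]
    rwa [he] at h
  have hsmall : HasSum
      (fun i => (2:ℝ) ^ s.card * ∑ j ∈ s,
        |t j * (Itil (x j, (0 : lp (fun _ : ℕ => ℝ) (ENNReal.ofReal q)))).2 i| ^ q)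
      ((2:ℝ) ^ s.card * ∑ j ∈ s,
        ‖(t j • (Itil (x j, (0 : lp (fun _ : ℕ => ℝ) (ENNReal.ofReal q)))).2 : lp (fun _ : ℕ => ℝ) (ENNReal.ofReal q))‖ ^ q) :=
    (hasSum_sum hvj).mul_left _
  have hcompare : (2:ℝ) ^ s.card * ∑ j ∈ s,
      ‖(t j • (Itil (x j, (0 : lp (fun _ : ℕ => ℝ) (ENNReal.ofReal q)))).2 : lp (fun _ : ℕ => ℝ) (ENNReal.ofReal q))‖ ^ q
      ≤ ∑ A ∈ s.powerset, ‖(∑ j ∈ s, ((if j ∈ A then (1:ℝ) else -1) * t j) •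
          (Itil (x j, (0 : lp (fun _ : ℕ => ℝ) (ENNReal.ofReal q)))).2 : lp (fun _ : ℕ => ℝ) (ENNReal.ofReal q))‖ ^ q := by
    refine hasSum_le (fun i => ?_) hsmall hbig
    exact aux_signed_sum hq2 s (fun j => t j * (Itil (x j, (0 : lp (fun _ : ℕ => ℝ) (ENNReal.ofReal q)))).2 i)
  have hsumR : ∑ A ∈ s.powerset, ‖(∑ j ∈ s, ((if j ∈ A then (1:ℝ) else -1) * t j) •
        (Itil (x j, (0 : lp (fun _ : ℕ => ℝ) (ENNReal.ofReal q)))).2 : lp (fun _ : ℕ => ℝ) (ENNReal.ofReal q))‖ ^ q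
      ≤ (2:ℝ) ^ s.card * (‖Itil‖ * (ubcx * ‖u‖)) ^ q := by
    calc ∑ A ∈ s.powerset, ‖(∑ j ∈ s, ((if j ∈ A then (1:ℝ) else -1) * t j) •
          (Itil (x j, (0 : lp (fun _ : ℕ => ℝ) (ENNReal.ofReal q)))).2 : lp (fun _ : ℕ => ℝ) (ENNReal.ofReal q))‖ ^ q
        ≤ ∑ _A ∈ s.powerset, (‖Itil‖ * (ubcx * ‖u‖)) ^ q :=
          Finset.sum_le_sum fun A _ =>
            Real.rpow_le_rpow (norm_nonneg _) (hAbound A) hq0.le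
      _ = (s.powerset.card : ℝ) * (‖Itil‖ * (ubcx * ‖u‖)) ^ q := by
          rw [Finset.sum_const, nsmul_eq_mul]
      _ = (2:ℝ) ^ s.card * (‖Itil‖ * (ubcx * ‖u‖)) ^ q := by
          rw [Finset.card_powerset]
          push_cast
          ring
  have hmain : ∑ j ∈ s,
      ‖(t j • (Itil (x j, (0 : lp (fun _ : ℕ => ℝ) (ENNReal.ofReal q)))).2 : lp (fun _ : ℕ => ℝ) (ENNReal.ofReal q))‖ ^ q
      ≤ (‖Itil‖ * (ubcx * ‖u‖)) ^ q := by
    have h2 : (0:ℝ) < 2 ^ s.card := by positivity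
    exact le_of_mul_le_mul_left (hcompare.trans hsumR) h2
  -- insert the lower bound for `‖ψ j‖`
  have hγ0 : (0:ℝ) ≤ δ * (1 - ‖Itil‖ * δ) / K₂ := by
    apply div_nonneg _ hK2pos.le
    have h1 : (0:ℝ) ≤ 1 - ‖Itil‖ * δ := by linarith
    nlinarith
  have hterm : ∀ j ∈ s, (|t j| * (δ * (1 - ‖Itil‖ * δ) / K₂)) ^ q
      ≤ ‖(t j • (Itil (x j, (0 : lp (fun _ : ℕ => ℝ) (ENNReal.ofReal q)))).2 : lp (fun _ : ℕ => ℝ) (ENNReal.ofReal q))‖ ^ q := by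
    intro j _
    apply Real.rpow_le_rpow (mul_nonneg (abs_nonneg _) hγ0) _ hq0.le
    rw [norm_smul, Real.norm_eq_abs]
    exact mul_le_mul_of_nonneg_left (hψlower j) (abs_nonneg _)
  have hfinal1 : (δ * (1 - ‖Itil‖ * δ) / K₂) ^ q * ∑ j ∈ s, |t j| ^ q
      ≤ (‖Itil‖ * (ubcx * ‖u‖)) ^ q := by
    calc (δ * (1 - ‖Itil‖ * δ) / K₂) ^ q * ∑ j ∈ s, |t j| ^ q
        = ∑ j ∈ s, (|t j| * (δ * (1 - ‖Itil‖ * δ) / K₂)) ^ q := by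
          rw [Finset.mul_sum]
          refine Finset.sum_congr rfl fun j _ => ?_
          rw [Real.mul_rpow (abs_nonneg _) hγ0]
          ring
      _ ≤ ∑ j ∈ s, ‖(t j • (Itil (x j, (0 : lp (fun _ : ℕ => ℝ) (ENNReal.ofReal q)))).2 :
            lp (fun _ : ℕ => ℝ) (ENNReal.ofReal q))‖ ^ q := Finset.sum_le_sum hterm
      _ ≤ (‖Itil‖ * (ubcx * ‖u‖)) ^ q := hmain
  have hT0 : (0:ℝ) ≤ ∑ i ∈ s, |t i| ^ q :=
    Finset.sum_nonneg fun i _ => Real.rpow_nonneg (abs_nonneg _) _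
  have hfinal2 : (δ * (1 - ‖Itil‖ * δ) / K₂) * (∑ i ∈ s, |t i| ^ q) ^ (1/q)
      ≤ ‖Itil‖ * (ubcx * ‖u‖) := by
    have h := Real.rpow_le_rpow
      (mul_nonneg (Real.rpow_nonneg hγ0 q) hT0) hfinal1
      (le_of_lt (by positivity : (0:ℝ) < 1/q))
    rw [Real.mul_rpow (Real.rpow_nonneg hγ0 q) hT0,
      ← Real.rpow_mul hγ0, mul_one_div_cancel hq0.ne', Real.rpow_one,
      ← Real.rpow_mul hR0, mul_one_div_cancel hq0.ne', Real.rpow_one] at h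
    exact h
  -- conclude
  have hδK : (0:ℝ) ≤ δ * K₂ := mul_nonneg hδ0.le hK2pos.le
  have heq : δ ^ 2 * (1 - ‖Itil‖ * δ) * (∑ i ∈ s, |t i| ^ q) ^ (1/q)
      = (δ * K₂) * ((δ * (1 - ‖Itil‖ * δ) / K₂) * (∑ i ∈ s, |t i| ^ q) ^ (1/q)) := by
    field_simp
  rw [heq]
  have h2 := mul_le_mul_of_nonneg_left hfinal2 hδK
  refine h2.trans ?_
  have hx1 : (0:ℝ) ≤ 1 - ‖Itil‖ * δ := by linarith
  have hx2 : (0:ℝ) ≤ K₂ * (ubcx * ‖u‖) :=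
    mul_nonneg hK2pos.le (mul_nonneg (by linarith) (norm_nonneg _))
  nlinarith [mul_nonneg hx1 hx2]
end
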